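/- Let v ∈ ℕ with v ≥ 1, let b ∈ ℕ with b < 2^v, and set m = α(b). Then for every t ∈ ℕ, Φ(b̄_{v,t}) = Φ(b̄_{v,∞}) − (Φ(b̄_{v,∞})/3^{mt})·2^{tv}, where division by 3^{mt} means multiplication by its inverse in ℤ₂. -/

import Mathlib

noncomputable section

/-- The inverse of `3` in the ring of 2-adic integers. -/
def inv3 : ℤ_[2] := Ring.inverse 3

/-- The `j`-th binary digit of a 2-adic integer (as `0` or `1`). -/
def dig (x : ℤ_[2]) (j : ℕ) : ℕ := if Nat.testBit (x.appr (j + 1)) j then 1 else 0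

/-- The number of one digits of `x` in positions `< j`. -/
def digCount (x : ℤ_[2]) (j : ℕ) : ℕ := ∑ i ∈ Finset.range j, dig x i

/-- Bernstein's formula for the 3x+1 conjugacy map `Φ`:
if `x = ∑_i 2^{d_i}` with `d_0 < d_1 < ⋯`, then `Φ x = -∑_i 2^{d_i} 3^{-i}`. -/
def Phi (x : ℤ_[2]) : ℤ_[2] :=
  -∑' j : ℕ, (dig x j : ℤ_[2]) * 2 ^ j * inv3 ^ digCount x j

/-- `L_k(x)`: the unique natural number `< 2^k` congruent to `x` mod `2^k`. -/
def Lk (k : ℕ) (x : ℤ_[2]) : ℕ := x.appr k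

theorem two_pow_dvd_sub_appr (k : ℕ) (x : ℤ_[2]) :
    (2 : ℤ_[2]) ^ k ∣ x - (x.appr k : ℤ_[2]) := by
  have h := PadicInt.appr_spec k x
  rw [Ideal.mem_span_singleton] at h
  exact_mod_cast h

theorem exists_Rk (k : ℕ) (x : ℤ_[2]) :
    ∃ z : ℤ_[2], x = (x.appr k : ℤ_[2]) + 2 ^ k * z := by
  obtain ⟨c, hc⟩ := two_pow_dvd_sub_appr k x
  exact ⟨c, by rw [← hc]; ring⟩

/-- `R_k(x)`: the unique 2-adic integer with `x = L_k(x) + 2^k · R_k(x)`. -/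
def Rk (k : ℕ) (x : ℤ_[2]) : ℤ_[2] := (exists_Rk k x).choose

/-- `α(a)`: the number of ones in the binary expansion of `a`. -/
def alphaNat (a : ℕ) : ℕ := (Nat.bits a).count true

/-- `b̄_{v,∞} = b · ∑_{i=0}^∞ 2^{v i}` as a 2-adic integer. -/
def bbar (b v : ℕ) : ℤ_[2] := (b : ℤ_[2]) * ∑' i : ℕ, (2 : ℤ_[2]) ^ (v * i)

/-- `b̄_{v,t} = b · ∑_{i=0}^{t-1} 2^{v i}` as a natural number. -/
def bbarFin (b v t : ℕ) : ℕ := b * ∑ i ∈ Finset.range t, 2 ^ (v * i)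

/-- The farPoint `fP(x,k)`: the least `r` such that no 2-adic congruent to `x`
mod `2^k` is a fixed point of `Φ` mod `2^{k+r}`, and `∞` if no such `r` exists. -/
def fP (x k : ℕ) : ℕ∞ :=
  sInf ((↑) '' {r : ℕ | ∀ z : ℤ_[2],
    (2 : ℤ_[2]) ^ k ∣ z - (x : ℤ_[2]) → ¬ (2 : ℤ_[2]) ^ (k + r) ∣ Phi z - z})

end

lemma appr_unique (k : ℕ) (x : ℤ_[2]) (n : ℕ) (hn : n < 2 ^ k)
    (hdvd : (2 : ℤ_[2]) ^ k ∣ x - (n : ℤ_[2])) : x.appr k = n := by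
  have h1 := two_pow_dvd_sub_appr k x
  have h2 : (2 : ℤ_[2]) ^ k ∣ (((x.appr k : ℤ) - (n : ℤ)) : ℤ_[2]) := by
    push_cast
    have : ((x.appr k : ℤ_[2]) - n) = (x - n) - (x - x.appr k) := by ring
    rw [this]
    exact dvd_sub hdvd h1
  have h3 : (2 ^ k : ℤ) ∣ ((x.appr k : ℤ) - n) := by
    have := (PadicInt.pow_p_dvd_int_iff (p := 2) k ((x.appr k : ℤ) - n))
    exact_mod_cast this.mp (by exact_mod_cast h2)
  have h4 : ((x.appr k : ℤ) - n) = 0 := by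
    refine Int.eq_zero_of_abs_lt_dvd h3 ?_
    have ha := PadicInt.appr_lt x k
    have ha' : (x.appr k : ℤ) < 2 ^ k := by exact_mod_cast ha
    have hn' : (n : ℤ) < 2 ^ k := by exact_mod_cast hn
    rw [abs_sub_lt_iff]
    constructor <;> omega
  omega

lemma dig_natCast (n j : ℕ) : dig (n : ℤ_[2]) j = if n.testBit j then 1 else 0 := by
  have : ((n : ℤ_[2])).appr (j+1) = n % 2 ^ (j+1) := by
    apply appr_unique
    · exact Nat.mod_lt _ (Nat.pow_pos (by norm_num))
    · refine ⟨(n / 2 ^ (j+1) : ℕ), ?_⟩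
      have h := Nat.mod_add_div n (2 ^ (j+1))
      have h2 : ((n : ℕ) : ℤ_[2]) = ((n % 2^(j+1) + 2^(j+1) * (n / 2^(j+1)) : ℕ) : ℤ_[2]) := by
        rw [Nat.mod_add_div]
      push_cast at h2
      linear_combination h2
  rw [dig, this, Nat.testBit_mod_two_pow]
  simp

lemma dig_congr {k : ℕ} {x y : ℤ_[2]} (h : (2 : ℤ_[2]) ^ k ∣ x - y) {j : ℕ} (hj : j < k) :
    dig x j = dig y j := by
  have : x.appr (j+1) = y.appr (j+1) := by
    apply appr_unique
    · exact PadicInt.appr_lt y (j+1)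
    · have h1 : x - (y.appr (j+1) : ℤ_[2]) = (x - y) + (y - y.appr (j+1)) := by ring
      rw [h1]
      exact dvd_add (dvd_trans (pow_dvd_pow 2 hj) h) (two_pow_dvd_sub_appr _ y)
  rw [dig, this, dig]

lemma dig_shift {a v : ℕ} (ha : a < 2 ^ v) (x : ℤ_[2]) (j : ℕ) :
    dig ((a : ℤ_[2]) + 2 ^ v * x) (j + v) = dig x j := by
  set n := x.appr (j+1) with hn
  have hnlt : n < 2 ^ (j+1) := PadicInt.appr_lt x (j+1)
  have happr : ((a : ℤ_[2]) + 2 ^ v * x).appr (j + v + 1) = a + 2 ^ v * n := by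
    apply appr_unique
    · have : a + 2^v * n < 2^v * (n + 1) := by nlinarith [Nat.pow_pos (n := v) (show 0 < 2 by norm_num)]
      calc a + 2^v * n < 2^v * (n+1) := this
        _ ≤ 2^v * 2^(j+1) := Nat.mul_le_mul_left _ hnlt
        _ = 2^(j+v+1) := by ring
    · obtain ⟨c, hc⟩ := two_pow_dvd_sub_appr (j+1) x
      refine ⟨c, ?_⟩
      push_cast
      have : x - n = 2^(j+1) * c := hc
      calc (a : ℤ_[2]) + 2^v*x - (a + 2^v*n) = 2^v * (x - n) := by ring
        _ = 2^v * (2^(j+1) * c) := by rw [this]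
        _ = 2^(j+v+1) * c := by ring
  rw [dig, happr, dig, ← hn]
  have htb : (a + 2^v * n).testBit (j + v) = n.testBit j := by
    rw [Nat.testBit_eq_decide_div_mod_eq, Nat.testBit_eq_decide_div_mod_eq]
    have : (a + 2^v * n) / 2^(j+v) = n / 2^j := by
      rw [pow_add, mul_comm (2^j) (2^v), ← Nat.div_div_eq_div_mul,
        Nat.add_mul_div_left _ _ (Nat.pow_pos (n := v) (by norm_num)),
        Nat.div_eq_of_lt ha, zero_add]
    rw [this]
  rw [htb]

lemma alphaNat_eq_sum : ∀ (v b : ℕ), b < 2 ^ v →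
    (Nat.bits b).count true = ∑ i ∈ Finset.range v, (if b.testBit i then 1 else 0) := by
  intro v
  induction v with
  | zero => intro b hb; interval_cases b; simp
  | succ v ih =>
    intro b hb
    rcases Nat.eq_zero_or_pos b with h0 | hpos
    · subst h0; simp
    · have hbits : b.bits = (b.testBit 0) :: (b / 2).bits := by
        conv_lhs => rw [← Nat.bit_testBit_zero_shiftRight_one b]
        rw [Nat.bits_append_bit]
        · rw [Nat.shiftRight_one]
        · intro h
          rw [Nat.shiftRight_one] at h
          simp only [Nat.testBit_zero, decide_eq_true_eq]
          omega
      rw [hbits, Finset.sum_range_succ', List.count_cons]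
      have hd : b / 2 < 2 ^ v := by
        rw [pow_succ] at hb; omega
      rw [ih (b / 2) hd]
      have : ∀ i, b.testBit (i + 1) = (b / 2).testBit i := fun i => Nat.testBit_add_one b i
      simp only [this]
      rcases hbt : b.testBit 0 <;> simp [hbt, add_comm]

lemma summable_aux (f : ℕ → ℤ_[2]) (hf : ∀ j, ‖f j‖ ≤ ((2:ℝ)⁻¹) ^ j) : Summable f := by
  refine Summable.of_norm_bounded (summable_geometric_of_lt_one (by norm_num) (by norm_num : (2:ℝ)⁻¹ < 1)) hf

lemma norm_two_padic : ‖(2:ℤ_[2])‖ = (2:ℝ)⁻¹ := by simpa using PadicInt.norm_p (p := 2)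

lemma summable_geo {v : ℕ} (hv : 1 ≤ v) : Summable (fun i : ℕ => (2:ℤ_[2]) ^ (v * i)) := by
  apply summable_aux
  intro j
  rw [norm_pow, norm_two_padic]
  apply pow_le_pow_of_le_one (by norm_num) (by norm_num)
  nlinarith

lemma summable_F (x : ℤ_[2]) :
    Summable (fun j : ℕ => (dig x j : ℤ_[2]) * 2 ^ j * inv3 ^ digCount x j) := by
  apply summable_aux
  intro j
  calc ‖(dig x j : ℤ_[2]) * 2 ^ j * inv3 ^ digCount x j‖
      ≤ ‖(dig x j : ℤ_[2]) * 2 ^ j‖ * ‖inv3 ^ digCount x j‖ := norm_mul_le _ _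
    _ ≤ (‖(dig x j : ℤ_[2])‖ * ‖(2:ℤ_[2]) ^ j‖) * 1 := by
        refine mul_le_mul (norm_mul_le _ _) (PadicInt.norm_le_one _) (norm_nonneg _) ?_
        positivity
    _ ≤ (1 * ‖(2:ℤ_[2]) ^ j‖) * 1 := by
        refine mul_le_mul_of_nonneg_right (mul_le_mul_of_nonneg_right (PadicInt.norm_le_one _) (norm_nonneg _)) ?_
        norm_num
    _ = ((2:ℝ)⁻¹) ^ j := by rw [norm_pow, norm_two_padic]; ring

lemma bbar_eq {v : ℕ} (hv : 1 ≤ v) (b t : ℕ) :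
    bbar b v = ((bbarFin b v t : ℕ) : ℤ_[2]) + 2 ^ (t * v) * bbar b v := by
  have hsum : ∑ i ∈ Finset.range t, (2:ℤ_[2])^(v*i) + ∑' i : ℕ, (2:ℤ_[2])^(v*(i+t))
      = ∑' i : ℕ, (2:ℤ_[2])^(v*i) :=
    Summable.sum_add_tsum_nat_add (f := fun i : ℕ => (2:ℤ_[2])^(v*i)) t (summable_geo hv)
  have htail : ∑' i : ℕ, (2:ℤ_[2])^(v*(i+t)) = 2^(t*v) * ∑' i : ℕ, (2:ℤ_[2])^(v*i) := by
    calc ∑' i : ℕ, (2:ℤ_[2])^(v*(i+t)) = ∑' i : ℕ, (2:ℤ_[2])^(t*v) * 2^(v*i) :=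
          tsum_congr fun i => by rw [← pow_add]; congr 1; ring
      _ = 2^(t*v) * ∑' i : ℕ, (2:ℤ_[2])^(v*i) := (summable_geo hv).tsum_mul_left _
  have hfin : ((bbarFin b v t : ℕ) : ℤ_[2])
      = (b : ℤ_[2]) * ∑ i ∈ Finset.range t, (2:ℤ_[2])^(v*i) := by
    rw [bbarFin]; push_cast; ring
  rw [bbar, hfin]
  conv_lhs => rw [← hsum]
  rw [htail]
  ring

lemma bbarFin_lt {v b : ℕ} (hb : b < 2 ^ v) : ∀ t, bbarFin b v t < 2 ^ (t * v) := by
  intro t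
  induction t with
  | zero => simp [bbarFin]
  | succ t ih =>
    have hrec : bbarFin b v (t+1) = b + 2^v * bbarFin b v t := by
      rw [bbarFin, bbarFin, Finset.sum_range_succ', Nat.mul_add, Finset.mul_sum, Finset.mul_sum,
        Finset.mul_sum]
      simp only [Nat.mul_zero, pow_zero, Nat.mul_one]
      have h2 : ∀ i, b * 2^(v*(i+1)) = 2^v * (b * 2^(v*i)) := fun i => by
        rw [Nat.mul_succ, pow_add]; ring
      simp only [h2]
      exact Nat.add_comm _ _
    rw [hrec]
    have h1 : 2^v * (bbarFin b v t + 1) = 2^v * bbarFin b v t + 2^v := by ring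
    have h2 : 2^v * (bbarFin b v t + 1) ≤ 2^v * 2^(t*v) := Nat.mul_le_mul_left _ ih
    have h3 : 2^v * 2^(t*v) = 2^((t+1)*v) := by rw [← pow_add]; ring_nf
    omega

lemma dig_bbar_period {v b : ℕ} (hv : 1 ≤ v) (hb : b < 2^v) (j : ℕ) :
    dig (bbar b v) (j + v) = dig (bbar b v) j := by
  have h1 : bbar b v = (b : ℤ_[2]) + 2^v * bbar b v := by
    have h := bbar_eq hv b 1
    simpa [bbarFin] using h
  conv_lhs => rw [h1]
  exact dig_shift hb _ j

lemma dig_bbar_low {v b : ℕ} (hv : 1 ≤ v) (t j : ℕ) (hj : j < t*v) :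
    dig (bbar b v) j = dig ((bbarFin b v t : ℕ) : ℤ_[2]) j :=
  dig_congr ⟨bbar b v, by linear_combination bbar_eq hv b t⟩ hj

lemma digCount_bbar_v {v b : ℕ} (hv : 1 ≤ v) (hb : b < 2^v) :
    digCount (bbar b v) v = alphaNat b := by
  rw [digCount, alphaNat, alphaNat_eq_sum v b hb]
  refine Finset.sum_congr rfl fun i hi => ?_
  rw [dig_bbar_low hv 1 i (by rw [one_mul]; exact Finset.mem_range.mp hi)]
  have h1 : bbarFin b v 1 = b := by simp [bbarFin]
  rw [h1, dig_natCast]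

lemma digCount_bbar_period {v b : ℕ} (hv : 1 ≤ v) (hb : b < 2^v) (j : ℕ) :
    digCount (bbar b v) (j + v) = digCount (bbar b v) j + alphaNat b := by
  rw [digCount, add_comm j v, Finset.sum_range_add]
  have h2 : ∀ i, dig (bbar b v) (v + i) = dig (bbar b v) i := fun i => by
    rw [add_comm v i]; exact dig_bbar_period hv hb i
  simp only [h2]
  rw [← digCount, ← digCount, digCount_bbar_v hv hb, add_comm]

lemma dig_bbar_period_t {v b : ℕ} (hv : 1 ≤ v) (hb : b < 2^v) :
    ∀ t j, dig (bbar b v) (j + t*v) = dig (bbar b v) j := by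
  intro t
  induction t with
  | zero => intro j; simp
  | succ t ih =>
    intro j
    have h : j + (t+1)*v = (j + t*v) + v := by ring
    rw [h, dig_bbar_period hv hb, ih]

lemma digCount_bbar_period_t {v b : ℕ} (hv : 1 ≤ v) (hb : b < 2^v) :
    ∀ t j, digCount (bbar b v) (j + t*v) = digCount (bbar b v) j + alphaNat b * t := by
  intro t
  induction t with
  | zero => intro j; simp
  | succ t ih =>
    intro j
    have h : j + (t+1)*v = (j + t*v) + v := by ring
    rw [h, digCount_bbar_period hv hb, ih]
    ring


/-- for `b < 2^v`, `v ≥ 1` and `m = α(b)`,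
`Φ(b̄_{v,t}) = Φ(b̄_{v,∞}) − (Φ(b̄_{v,∞})/3^{mt})·2^{tv}` for all `t`. -/
theorem stmt11 (v : ℕ) (hv : 1 ≤ v) (b : ℕ) (hb : b < 2 ^ v) (t : ℕ) :
    Phi ((bbarFin b v t : ℕ) : ℤ_[2]) =
      Phi (bbar b v) - Phi (bbar b v) * inv3 ^ (alphaNat b * t) * 2 ^ (t * v) := by
  have hdvd : (2:ℤ_[2])^(t*v) ∣ bbar b v - ((bbarFin b v t : ℕ) : ℤ_[2]) :=
    ⟨bbar b v, by linear_combination bbar_eq hv b t⟩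
  have hdigeq : ∀ j, j < t*v → dig ((bbarFin b v t : ℕ) : ℤ_[2]) j = dig (bbar b v) j :=
    fun j hj => (dig_congr hdvd hj).symm
  have hcnteq : ∀ j, j ≤ t*v →
      digCount ((bbarFin b v t : ℕ) : ℤ_[2]) j = digCount (bbar b v) j := by
    intro j hj
    rw [digCount, digCount]
    exact Finset.sum_congr rfl fun i hi => hdigeq i (lt_of_lt_of_le (Finset.mem_range.mp hi) hj)
  have hdigN : ∀ j, t*v ≤ j → dig ((bbarFin b v t : ℕ) : ℤ_[2]) j = 0 := by
    intro j hj
    rw [dig_natCast]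
    have hlt : bbarFin b v t < 2^j :=
      lt_of_lt_of_le (bbarFin_lt hb t) (Nat.pow_le_pow_right (by norm_num) hj)
    simp [Nat.testBit_lt_two_pow hlt]
  have hPhiN : Phi ((bbarFin b v t : ℕ) : ℤ_[2])
      = -∑ j ∈ Finset.range (t*v),
          (dig (bbar b v) j : ℤ_[2]) * 2^j * inv3 ^ digCount (bbar b v) j := by
    rw [Phi]
    congr 1
    rw [tsum_eq_sum (s := Finset.range (t*v)) (fun j hj => by
      rw [Finset.mem_range, not_lt] at hj
      rw [hdigN j hj]; simp)]
    exact Finset.sum_congr rfl fun j hj => by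
      rw [hdigeq j (Finset.mem_range.mp hj), hcnteq j (le_of_lt (Finset.mem_range.mp hj))]
  have hsum : ∑ j ∈ Finset.range (t*v),
        (dig (bbar b v) j : ℤ_[2]) * 2^j * inv3 ^ digCount (bbar b v) j
      + ∑' j : ℕ, (dig (bbar b v) (j + t*v) : ℤ_[2]) * 2^(j + t*v)
          * inv3 ^ digCount (bbar b v) (j + t*v)
      = ∑' j : ℕ, (dig (bbar b v) j : ℤ_[2]) * 2^j * inv3 ^ digCount (bbar b v) j :=
    Summable.sum_add_tsum_nat_add (t*v) (summable_F _)
  have htail : ∑' j : ℕ, (dig (bbar b v) (j + t*v) : ℤ_[2]) * 2^(j + t*v)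
          * inv3 ^ digCount (bbar b v) (j + t*v)
      = 2^(t*v) * inv3^(alphaNat b * t)
          * ∑' j : ℕ, (dig (bbar b v) j : ℤ_[2]) * 2^j * inv3 ^ digCount (bbar b v) j := by
    calc _ = ∑' j : ℕ, 2^(t*v) * inv3^(alphaNat b * t)
          * ((dig (bbar b v) j : ℤ_[2]) * 2^j * inv3 ^ digCount (bbar b v) j) :=
        tsum_congr fun j => by
          rw [dig_bbar_period_t hv hb t j, digCount_bbar_period_t hv hb t j, pow_add, pow_add]
          ring
      _ = _ := (summable_F _).tsum_mul_left _
  rw [hPhiN, Phi]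
  linear_combination htail - hsum
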